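/- Let O be a Dedekind domain, L : O^n → O a surjective O-linear map, and I ⊆ O an ideal. Let σ = {v₁, …, v_{k+1}} be a family extending to a basis of O^n with k + 1 < n, and assume that for each i either L(v_i) ∈ I or L(v_i) − 1 ∈ I. Then the following are equivalent: (i) there is a good basis of O^n containing v₁, …, v_{k+1}; (ii) there is a good I-basis v₁, …, v_n of O^n extending σ with L(v_i) = 1 for all i ≥ k + 2; (iii) there exists a submodule W of O^n with V_σ ⊕ W = O^n and L(W) = O. -/

import Mathlib

open Submodule Set Function Module

variable {O : Type} [CommRing O] {M : Type} [AddCommGroup M] [Module O M]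

theorem exists_basis_add_smul {ι : Type} (b : Basis ι O M) (m₀ : ι) (c : ι → O)
    (hc : c m₀ = 0) : ∃ b' : Basis ι O M, ∀ m, b' m = b m + c m • b m₀ := by
  let f : M →ₗ[O] O := b.constr ℕ c
  have hf : ∀ m, f (b m) = c m := fun m => b.constr_basis ℕ c m
  have hf0 : f (b m₀) = 0 := by rw [hf, hc]
  let g : M →ₗ[O] M := LinearMap.id + (LinearMap.toSpanSingleton O M (b m₀)).comp f
  let g' : M →ₗ[O] M := LinearMap.id - (LinearMap.toSpanSingleton O M (b m₀)).comp f
  have h1 : g.comp g' = LinearMap.id := by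
    ext x
    simp [g, g', LinearMap.toSpanSingleton_apply, map_sub, map_smul, hf0, sub_add,
      smul_eq_mul]
  have h2 : g'.comp g = LinearMap.id := by
    ext x
    simp [g, g', LinearMap.toSpanSingleton_apply, map_add, map_smul, hf0,
      smul_eq_mul]
  let e : M ≃ₗ[O] M := LinearEquiv.ofLinear g g' h1 h2
  refine ⟨b.map e, fun m => ?_⟩
  simp [e, g, Basis.map_apply, LinearMap.toSpanSingleton_apply, hf]

theorem exists_basis_pair (b : Basis (Fin 2) O M) (x y p q : O)
    (hdet : x * q - y * p = 1) :
    ∃ b' : Basis (Fin 2) O M, b' 0 = x • b 0 + y • b 1 ∧ b' 1 = p • b 0 + q • b 1 := by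
  let g : M →ₗ[O] M := b.constr ℕ ![x • b 0 + y • b 1, p • b 0 + q • b 1]
  let g' : M →ₗ[O] M := b.constr ℕ ![q • b 0 - y • b 1, -p • b 0 + x • b 1]
  have hg0 : g (b 0) = x • b 0 + y • b 1 := by simp [g]
  have hg1 : g (b 1) = p • b 0 + q • b 1 := by simp [g]
  have hg'0 : g' (b 0) = q • b 0 - y • b 1 := by simp [g']
  have hg'1 : g' (b 1) = -p • b 0 + x • b 1 := by simp [g']
  have k1 : ∀ u w : M, q • (x • u + y • w) - y • (p • u + q • w) = u := by
    intro u w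
    conv_rhs => rw [← one_smul O u, ← hdet]
    module
  have k2 : ∀ u w : M, -p • (x • u + y • w) + x • (p • u + q • w) = w := by
    intro u w
    conv_rhs => rw [← one_smul O w, ← hdet]
    module
  have k3 : ∀ u w : M, x • (q • u - y • w) + y • (-p • u + x • w) = u := by
    intro u w
    conv_rhs => rw [← one_smul O u, ← hdet]
    module
  have k4 : ∀ u w : M, p • (q • u - y • w) + q • (-p • u + x • w) = w := by
    intro u w
    conv_rhs => rw [← one_smul O w, ← hdet]
    module
  have h1 : g.comp g' = LinearMap.id := by
    refine b.ext (Fin.forall_fin_two.mpr ⟨?_, ?_⟩)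
    · rw [LinearMap.comp_apply, LinearMap.id_apply, hg'0, map_sub, map_smul, map_smul,
        hg0, hg1]
      exact k1 _ _
    · rw [LinearMap.comp_apply, LinearMap.id_apply, hg'1, map_add, map_smul, map_smul,
        hg0, hg1]
      exact k2 _ _
  have h2 : g'.comp g = LinearMap.id := by
    refine b.ext (Fin.forall_fin_two.mpr ⟨?_, ?_⟩)
    · rw [LinearMap.comp_apply, LinearMap.id_apply, hg0, map_add, map_smul, map_smul,
        hg'0, hg'1]
      exact k3 _ _
    · rw [LinearMap.comp_apply, LinearMap.id_apply, hg1, map_add, map_smul, map_smul,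
        hg'0, hg'1]
      exact k4 _ _
  let e : M ≃ₗ[O] M := LinearEquiv.ofLinear g g' h1 h2
  exact ⟨b.map e, by simp [e, Basis.map_apply, hg0], by simp [e, Basis.map_apply, hg1]⟩

theorem isCompl_span_image {ι : Type} (b : Basis ι O M) (s : Set ι) :
    IsCompl (span O (b '' s)) (span O (b '' sᶜ)) := by
  constructor
  · exact b.linearIndependent.disjoint_span_image disjoint_compl_right
  · rw [codisjoint_iff, ← Submodule.span_union, ← Set.image_union, Set.union_compl_self,
      Set.image_univ, b.span_eq]

theorem exists_crt (S : Finset (Ideal O)) (hmax : ∀ m ∈ S, m.IsMaximal) (τ : Ideal O → O) :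
    ∃ t : O, ∀ m ∈ S, t - τ m ∈ m := by
  classical
  induction S using Finset.induction_on with
  | empty => exact ⟨0, by simp⟩
  | @insert m₀ S hm₀S ih =>
    obtain ⟨t, ht⟩ := ih (fun m hm => hmax m (Finset.mem_insert_of_mem hm))
    have hm₀ : m₀.IsMaximal := hmax m₀ (Finset.mem_insert_self _ _)
    set P : Ideal O := S.prod id with hP
    have hsup : m₀ ⊔ P = ⊤ := by
      by_contra h
      have hle : m₀ ⊔ P = m₀ := by
        rcases hm₀.1.2 (m₀ ⊔ P) with h'
        cases (lt_or_eq_of_le (le_sup_left : m₀ ≤ m₀ ⊔ P)) with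
        | inl hlt => exact absurd (hm₀.1.2 _ hlt) h
        | inr he => exact he.symm
      have hPle : P ≤ m₀ := le_trans le_sup_right hle.le
      obtain ⟨m, hmS, hmle⟩ := (Ideal.IsPrime.prod_le hm₀.isPrime).mp hPle
      have : m = m₀ := (hmax m (Finset.mem_insert_of_mem hmS)).eq_of_le hm₀.ne_top hmle
      exact hm₀S (this ▸ hmS)
    have h1 : (1 : O) ∈ m₀ ⊔ P := by rw [hsup]; trivial
    obtain ⟨e, he, f, hf, hef⟩ := Submodule.mem_sup.mp h1
    refine ⟨f * τ m₀ + e * t, fun m hm => ?_⟩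
    rcases Finset.mem_insert.mp hm with rfl | hmS
    · have hz : f + e - 1 = 0 := by linear_combination hef
      have : f * τ m + e * t - τ m = e * (t - τ m) + (f + e - 1) * τ m := by ring
      rw [this, hz, zero_mul, add_zero]
      exact Ideal.mul_mem_right _ _ he
    · have hfm : f ∈ m := by
        have : P ≤ m := le_trans Ideal.prod_le_inf (Finset.inf_le hmS)
        exact this hf
      have hz : e + f - 1 = 0 := by linear_combination hef
      have : f * τ m₀ + e * t - τ m = (t - τ m) + (f * (τ m₀ - t)) + (e + f - 1) * t := by ring
      rw [this, hz, zero_mul, add_zero]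
      exact Ideal.add_mem _ (ht m hmS) (Ideal.mul_mem_right _ _ hfm)

theorem finite_maximal_mem [IsDomain O] [IsDedekindDomain O] {x : O} (hx : x ≠ 0) :
    {m : Ideal O | m.IsMaximal ∧ x ∈ m}.Finite := by
  have hI : Ideal.span {x} ≠ (0 : Ideal O) := by
    simpa [Submodule.zero_eq_bot] using (Ideal.span_singleton_eq_bot).not.mpr hx
  have hfin : {J : Ideal O | J ∣ Ideal.span {x}}.Finite := by
    haveI : Fintype {J : Ideal O // J ∣ Ideal.span {x}} :=
      UniqueFactorizationMonoid.fintypeSubtypeDvd _ hI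
    exact Set.finite_coe_iff.mp (Finite.of_fintype {J : Ideal O // J ∣ Ideal.span {x}})
  refine hfin.subset fun m hm => ?_
  exact Ideal.dvd_iff_le.mpr (Ideal.span_le.mpr (Set.singleton_subset_iff.mpr hm.2))

theorem sr_step [IsDomain O] [IsDedekindDomain O] (r : ℕ) (hr : 2 ≤ r) (a : Fin (r+1) → O)
    (h : Ideal.span (Set.range a) = ⊤) :
    ∃ t : Fin r → O,
      Ideal.span (Set.range fun j : Fin r =>
        a j.castSucc + t j * a (Fin.last r)) = ⊤ := by
  classical
  by_cases hz : ∀ j : Fin r, a j.castSucc = 0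
  · have h1 : (1 : O) ∈ Ideal.span (Set.range a) := by rw [h]; trivial
    have hle : Ideal.span (Set.range a) ≤ Ideal.span {a (Fin.last r)} := by
      rw [Ideal.span_le]
      rintro _ ⟨i, rfl⟩
      induction i using Fin.lastCases with
      | last => exact Ideal.subset_span rfl
      | cast j => rw [hz j]; exact Ideal.zero_mem _
    obtain ⟨u, hu⟩ := Ideal.mem_span_singleton'.mp (hle h1)
    set z0 : Fin r := ⟨0, by omega⟩ with hz0
    refine ⟨fun j => if j = z0 then u else 0, ?_⟩
    rw [Ideal.eq_top_iff_one]
    have : a z0.castSucc + (if z0 = z0 then u else 0) * a (Fin.last r) = 1 := by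
      rw [if_pos rfl, hz z0, hu, zero_add]
    exact this ▸ Ideal.subset_span ⟨z0, rfl⟩
  · push_neg at hz
    obtain ⟨j₀, hj₀⟩ := hz
    set z0 : Fin r := ⟨0, by omega⟩ with hz0
    set z1 : Fin r := ⟨1, by omega⟩ with hz1
    set i₀ : Fin r := if j₀ = z0 then z1 else z0 with hi₀
    have hij : i₀ ≠ j₀ := by
      by_cases hj : j₀ = z0
      · rw [hi₀, if_pos hj, hj]
        simp [hz0, hz1, Fin.ext_iff]
      · rw [hi₀, if_neg hj]
        exact fun hc => hj hc.symm
    set τ : Ideal O → O := fun m =>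
      if a i₀.castSucc + a (Fin.last r) ∈ m then 0 else 1 with hτ
    -- key pointwise claim
    have key : ∀ m : Ideal O, m.IsMaximal →
        ∃ j : Fin r, a j.castSucc + (if j = i₀ then τ m else 0) * a (Fin.last r) ∉ m := by
      intro m hm
      by_cases hPm : a j₀.castSucc ∈ m
      · have hex : ∃ l : Fin (r+1), a l ∉ m := by
          by_contra hall
          push_neg at hall
          have : Ideal.span (Set.range a) ≤ m := Ideal.span_le.mpr (by rintro _ ⟨l, rfl⟩; exact hall l)
          rw [h] at this
          exact hm.ne_top (top_le_iff.mp this)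
        obtain ⟨l, hl⟩ := hex
        by_cases hlast : a (Fin.last r) ∈ m
        · -- l is not last
          induction l using Fin.lastCases with
          | last => exact absurd hlast hl
          | cast j =>
            refine ⟨j, fun hc => hl ?_⟩
            have : (if j = i₀ then τ m else 0) * a (Fin.last r) ∈ m :=
              Ideal.mul_mem_left _ _ hlast
            simpa using Ideal.sub_mem _ hc this
        · -- a last ∉ m ; use j := i₀ with τ
          refine ⟨i₀, ?_⟩
          rw [if_pos rfl]
          by_cases hsum : a i₀.castSucc + a (Fin.last r) ∈ m
          · have hτ0 : τ m = 0 := by simp only [hτ]; rw [if_pos hsum]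
            rw [hτ0, zero_mul, add_zero]
            intro hc
            exact hlast (by simpa using Ideal.sub_mem _ hsum hc)
          · have hτ1 : τ m = 1 := by simp only [hτ]; rw [if_neg hsum]
            rw [hτ1, one_mul]
            exact hsum
      · refine ⟨j₀, ?_⟩
        rw [if_neg (fun (hc : j₀ = i₀) => hij hc.symm), zero_mul, add_zero]
        exact hPm
    -- CRT
    have hfin : {m : Ideal O | m.IsMaximal ∧ a j₀.castSucc ∈ m}.Finite :=
      finite_maximal_mem hj₀
    obtain ⟨t₀, ht₀⟩ := exists_crt (O := O) hfin.toFinset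
      (fun m hm => ((hfin.mem_toFinset.mp hm).1)) τ
    refine ⟨fun j => if j = i₀ then t₀ else 0, ?_⟩
    by_contra hne
    obtain ⟨m, hmmax, hmle⟩ := Ideal.exists_le_maximal _ hne
    have hall : ∀ j : Fin r,
        a j.castSucc + (if j = i₀ then t₀ else 0) * a (Fin.last r) ∈ m :=
      fun j => hmle (Ideal.subset_span ⟨j, rfl⟩)
    obtain ⟨j, hj⟩ := key m hmmax
    by_cases hPm : a j₀.castSucc ∈ m
    · have hmem : m ∈ hfin.toFinset := hfin.mem_toFinset.mpr ⟨hmmax, hPm⟩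
      have hcrt : t₀ - τ m ∈ m := ht₀ m hmem
      by_cases hji : j = i₀
      · refine hj ?_
        rw [hji, if_pos rfl]
        have h2 : (t₀ - τ m) * a (Fin.last r) ∈ m := Ideal.mul_mem_right _ _ hcrt
        have h3 := Ideal.sub_mem _ (hall i₀) h2
        rw [if_pos rfl] at h3
        convert h3 using 1
        ring
      · refine hj ?_
        rw [if_neg hji]
        have := hall j
        rwa [if_neg hji] at this
    · have := hall j₀
      rw [if_neg (fun (hc : j₀ = i₀) => hij hc.symm), zero_mul, add_zero] at this
      exact hPm this

theorem apply_mem_span_values {ι : Type} [Fintype ι] (b : Basis ι O M) (ℓ : M →ₗ[O] O)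
    (z : M) : ℓ z ∈ Ideal.span (Set.range fun j => ℓ (b j)) := by
  rw [← b.sum_repr z, map_sum]
  refine Ideal.sum_mem _ fun j _ => ?_
  rw [map_smul, smul_eq_mul]
  exact Ideal.mul_mem_left _ _ (Ideal.subset_span ⟨j, rfl⟩)

theorem uc0 [IsDomain O] [IsDedekindDomain O] (r : ℕ) :
    ∀ (M : Type) [AddCommGroup M] [Module O M] (ℓ : M →ₗ[O] O)
      (b : Basis (Fin (r + 1)) O M),
      Ideal.span (Set.range fun j => ℓ (b j)) = ⊤ →
      ∃ c : Basis (Fin (r + 1)) O M, ℓ (c 0) = 1 := by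
  induction r with
  | zero =>
    intro M _ _ ℓ b h
    have h1 : (1 : O) ∈ Ideal.span (Set.range fun j => ℓ (b j)) := by rw [h]; trivial
    have hr : (Set.range fun j : Fin 1 => ℓ (b j)) = {ℓ (b 0)} := by
      ext z
      constructor
      · rintro ⟨j, rfl⟩
        rw [Subsingleton.elim j 0]
        rfl
      · rintro rfl
        exact ⟨0, rfl⟩
    rw [hr] at h1
    obtain ⟨u, hu⟩ := Ideal.mem_span_singleton'.mp h1
    have hu' : ℓ (b 0) * u = 1 := by rw [mul_comm]; exact hu
    refine ⟨b.unitsSMul fun _ => ⟨u, ℓ (b 0), hu, hu'⟩, ?_⟩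
    rw [Basis.unitsSMul_apply, Units.smul_def, map_smul, smul_eq_mul]
    exact hu
  | succ r ih =>
    intro M _ _ ℓ b h
    match r, ih with
    | 0, _ =>
      -- rank two case
      have h1 : (1 : O) ∈ Ideal.span (Set.range fun j => ℓ (b j)) := by rw [h]; trivial
      have hr : (Set.range fun j : Fin 2 => ℓ (b j)) = {ℓ (b 0), ℓ (b 1)} := by
        ext z
        simp [Fin.exists_fin_two, eq_comm]
      rw [hr] at h1
      obtain ⟨x, y, hxy⟩ := Ideal.mem_span_pair.mp h1
      obtain ⟨b', hb'0, _⟩ := exists_basis_pair b x y (-(ℓ (b 1))) (ℓ (b 0))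
        (by linear_combination hxy)
      refine ⟨b', ?_⟩
      rw [hb'0, map_add, map_smul, map_smul, smul_eq_mul, smul_eq_mul]
      linear_combination hxy
    | (s+1), ih =>
      -- rank r+2 = s+3 ≥ 3
      set a : Fin (s + 3) → O := fun l => ℓ (b l) with ha
      obtain ⟨t, hts⟩ := sr_step (O := O) (s + 2) (by omega) a h
      set tc : Fin (s + 3) → O := Fin.snoc t 0 with htc
      obtain ⟨b', hb'⟩ := exists_basis_add_smul b (Fin.last (s + 2)) tc (by simp [htc])
      have hval : ∀ j : Fin (s + 2),
          ℓ (b' j.castSucc) = a j.castSucc + t j * a (Fin.last (s + 2)) := by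
        intro j
        rw [hb', map_add, map_smul, smul_eq_mul, htc]
        simp [ha]
      set w : Fin (s + 2) → M := fun j => b' j.castSucc with hw
      have hwli : LinearIndependent O w :=
        b'.linearIndependent.comp Fin.castSucc (Fin.castSucc_injective _)
      set M₁ : Submodule O M := Submodule.span O (Set.range w) with hM₁
      let bM₁ : Basis (Fin (s + 2)) O M₁ := Basis.span hwli
      let ℓ₁ : M₁ →ₗ[O] O := ℓ.comp M₁.subtype
      have hspan₁ : Ideal.span (Set.range fun j => ℓ₁ (bM₁ j)) = ⊤ := by
        have : (fun j => ℓ₁ (bM₁ j)) =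
            fun j : Fin (s + 2) => a j.castSucc + t j * a (Fin.last (s + 2)) := by
          funext j
          have : ((bM₁ j : M₁) : M) = w j := congrArg Subtype.val (Basis.span_apply hwli j)
          show ℓ ((bM₁ j : M₁) : M) = _
          rw [this, hw]
          exact hval j
        rw [this]
        exact hts
      obtain ⟨c₁, hc₁⟩ := ih M₁ ℓ₁ bM₁ hspan₁
      -- the complementary rank-one piece
      set u : Fin 1 → M := fun _ => b' (Fin.last (s + 2)) with hu
      have huli : LinearIndependent O u :=
        b'.linearIndependent.comp (fun _ => Fin.last (s + 2))
          (Function.injective_of_subsingleton _)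
      set M₂ : Submodule O M := Submodule.span O (Set.range u) with hM₂
      let b₂ : Basis (Fin 1) O M₂ := Basis.span huli
      have hcompl : IsCompl M₁ M₂ := by
        have e1 : Set.range w = b' '' Set.range (Fin.castSucc : Fin (s+2) → Fin (s+3)) := by
          rw [hw, ← Set.range_comp]; rfl
        have e2 : Set.range u = b' '' (Set.range (Fin.castSucc : Fin (s+2) → Fin (s+3)))ᶜ := by
          have hc : (Set.range (Fin.castSucc : Fin (s+2) → Fin (s+3)))ᶜ
              = {Fin.last (s+2)} := by
            ext i
            simp only [Set.mem_compl_iff, Set.mem_range, Set.mem_singleton_iff]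
            rw [Fin.exists_castSucc_eq]
            tauto
          rw [hc, Set.image_singleton, hu]
          ext z
          constructor
          · rintro ⟨_, rfl⟩; rfl
          · rintro rfl; exact ⟨0, rfl⟩
        rw [hM₁, hM₂, e1, e2]
        exact isCompl_span_image b' _
      let E := Submodule.prodEquivOfIsCompl M₁ M₂ hcompl
      refine ⟨((c₁.prod b₂).map E).reindex finSumFinEquiv, ?_⟩
      rw [Basis.reindex_apply]
      have h0 : finSumFinEquiv.symm (0 : Fin (s + 2 + 1)) = Sum.inl (0 : Fin (s + 2)) := by
        have : (0 : Fin (s + 2 + 1)) = Fin.castAdd 1 (0 : Fin (s + 2)) := rfl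
        rw [this, finSumFinEquiv_symm_apply_castAdd]
      rw [h0, Basis.map_apply, Basis.prod_apply]
      simp only [Sum.elim_inl, Function.comp_apply, LinearMap.inl_apply]
      have : E ((c₁ 0 : M₁), (0 : M₂)) = ((c₁ 0 : M₁) : M) := by
        simp [E, Submodule.coe_prodEquivOfIsCompl']
      rw [this]
      exact hc₁

theorem uc [IsDomain O] [IsDedekindDomain O] (r : ℕ)
    (M : Type) [AddCommGroup M] [Module O M] (ℓ : M →ₗ[O] O)
    (b : Basis (Fin (r + 1)) O M)
    (h : Ideal.span (Set.range fun j => ℓ (b j)) = ⊤) :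
    ∃ c : Basis (Fin (r + 1)) O M, ∀ j, ℓ (c j) = 1 := by
  classical
  obtain ⟨c, hc⟩ := uc0 r M ℓ b h
  obtain ⟨c', hc'⟩ := exists_basis_add_smul c 0 (fun m => 1 - ℓ (c m)) (by simp [hc])
  refine ⟨c', fun j => ?_⟩
  rw [hc' j, map_add, map_smul, smul_eq_mul, hc, mul_one]
  show ℓ (c j) + (1 - ℓ (c j)) = 1
  ring

/-- **Proposition (characterisation of good partial bases).**  Let `O` be a Dedekind
domain, `L : O^n → O` surjective, `I ⊆ O` an ideal, and `σ = {v₁, …, v_{k+1}}` a partial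
basis of `O^n` with `k + 1 < n` such that each `L vᵢ` is congruent to `0` or `1` mod `I`.
Then the following are equivalent:
(i) `σ` is contained in a good basis (one containing a vector with `L`-value `1`);
(ii) `σ` is contained in a good `I`-basis whose vectors outside `σ` all have `L`-value `1`;
(iii) the span `V_σ` has a complement `W` in `O^n` with `L(W) = O`. -/
theorem good_partial_basis_characterisation
    (O : Type) [CommRing O] [IsDomain O] [IsDedekindDomain O]
    (n k : ℕ) (hk : k + 1 < n)
    (L : (Fin n → O) →ₗ[O] O) (hL : Function.Surjective L)
    (I : Ideal O)
    (v : Fin (k + 1) → (Fin n → O))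
    (hσ : ∃ (b : Basis (Fin n) O (Fin n → O)) (ι : Fin (k + 1) ↪ Fin n),
      ∀ i, b (ι i) = v i)
    (hI : ∀ i, L (v i) ∈ I ∨ L (v i) - 1 ∈ I) :
    ((∃ (b : Basis (Fin n) O (Fin n → O)) (ι : Fin (k + 1) ↪ Fin n),
        (∀ i, b (ι i) = v i) ∧ ∃ m, L (b m) = 1) ↔
      (∃ (b : Basis (Fin n) O (Fin n → O)) (ι : Fin (k + 1) ↪ Fin n),
        (∀ i, b (ι i) = v i) ∧ (∀ m, L (b m) ∈ I ∨ L (b m) - 1 ∈ I) ∧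
        (∃ m, L (b m) = 1) ∧ (∀ m, (∀ i, m ≠ ι i) → L (b m) = 1))) ∧
    ((∃ (b : Basis (Fin n) O (Fin n → O)) (ι : Fin (k + 1) ↪ Fin n),
        (∀ i, b (ι i) = v i) ∧ (∀ m, L (b m) ∈ I ∨ L (b m) - 1 ∈ I) ∧
        (∃ m, L (b m) = 1) ∧ (∀ m, (∀ i, m ≠ ι i) → L (b m) = 1)) ↔
      (∃ W : Submodule O (Fin n → O),
        IsCompl (Submodule.span O (Set.range v)) W ∧ Submodule.map L W = ⊤)) := by
  classical
  obtain ⟨bh, ih, hbh⟩ := hσ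
  have houtside : ∀ (ι : Fin (k+1) ↪ Fin n), ∃ m : Fin n, ∀ i, m ≠ ι i := by
    intro ι
    by_contra hcon
    push_neg at hcon
    have hsurj : Function.Surjective ι := fun m => by
      obtain ⟨i, hi⟩ := hcon m; exact ⟨i, hi.symm⟩
    have := Fintype.card_le_of_surjective ι hsurj
    simp only [Fintype.card_fin] at this
    omega
  have hconstr : ∀ (b : Basis (Fin n) O (Fin n → O)) (ι : Fin (k+1) ↪ Fin n),
      (∀ i, b (ι i) = v i) → (∃ m₀, L (b m₀) = 1) →
      ∃ (b' : Basis (Fin n) O (Fin n → O)),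
        (∀ i, b' (ι i) = v i) ∧ (∀ m, (∀ i, m ≠ ι i) → L (b' m) = 1) := by
    rintro b ι hbv ⟨m₀, hm₀⟩
    set c : Fin n → O := fun m => if ∃ i, m = ι i then 0 else 1 - L (b m) with hc
    have hcm₀ : c m₀ = 0 := by
      by_cases hmem : ∃ i, m₀ = ι i
      · simp only [hc]; rw [if_pos hmem]
      · simp only [hc]; rw [if_neg hmem, hm₀, sub_self]
    obtain ⟨b', hb'⟩ := exists_basis_add_smul b m₀ c hcm₀
    refine ⟨b', fun i => ?_, fun m hm => ?_⟩
    · rw [hb']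
      have : c (ι i) = 0 := by simp only [hc]; rw [if_pos ⟨i, rfl⟩]
      rw [this, zero_smul, add_zero, hbv]
    · rw [hb' m, map_add, map_smul, smul_eq_mul]
      have : c m = 1 - L (b m) := by
        simp only [hc]; rw [if_neg]
        rintro ⟨i, hi⟩; exact hm i hi
      rw [this, hm₀, mul_one]
      ring
  refine ⟨⟨?_, ?_⟩, ⟨?_, ?_⟩⟩
  · rintro ⟨b, ι, hbv, hgood⟩
    obtain ⟨b', hb'v, hb'out⟩ := hconstr b ι hbv hgood
    obtain ⟨m₁, hm₁⟩ := houtside ι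
    refine ⟨b', ι, hb'v, ?_, ⟨m₁, hb'out m₁ hm₁⟩, hb'out⟩
    intro m
    by_cases hmem : ∃ i, m = ι i
    · obtain ⟨i, rfl⟩ := hmem
      rw [hb'v i]; exact hI i
    · push_neg at hmem
      right
      rw [hb'out m hmem, sub_self]; exact I.zero_mem
  · rintro ⟨b, ι, hbv, _, hgood, _⟩
    exact ⟨b, ι, hbv, hgood⟩
  · rintro ⟨b, ι, hbv, hIcond, hgood, hout⟩
    have hrv : Set.range v = b '' (Set.range ι) := by
      ext z
      constructor
      · rintro ⟨i, rfl⟩; exact ⟨ι i, ⟨i, rfl⟩, hbv i⟩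
      · rintro ⟨m, ⟨i, rfl⟩, rfl⟩; exact ⟨i, (hbv i).symm⟩
    refine ⟨Submodule.span O (b '' (Set.range ι)ᶜ), ?_, ?_⟩
    · rw [hrv]
      exact isCompl_span_image b _
    · obtain ⟨m₁, hm₁⟩ := houtside ι
      rw [Ideal.eq_top_iff_one]
      have hmem : b m₁ ∈ Submodule.span O (b '' (Set.range ι)ᶜ) :=
        Submodule.subset_span ⟨m₁, fun ⟨i, hi⟩ => hm₁ i hi.symm, rfl⟩
      have h1 := Submodule.mem_map_of_mem (f := L) hmem
      rwa [hout m₁ hm₁] at h1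
  · rintro ⟨W, hcompl, hmap⟩
    have hvli : LinearIndependent O v := by
      have h1 := bh.linearIndependent.comp ih ih.injective
      have h2 : (bh ∘ ih) = v := funext hbh
      rwa [h2] at h1
    set Vσ : Submodule O (Fin n → O) := Submodule.span O (Set.range v) with hVσ
    let bσ : Basis (Fin (k+1)) O Vσ := Basis.span hvli
    have hrv : Set.range v = bh '' (Set.range ih) := by
      ext z
      constructor
      · rintro ⟨i, rfl⟩; exact ⟨ih i, ⟨i, rfl⟩, hbh i⟩
      · rintro ⟨m, ⟨i, rfl⟩, rfl⟩; exact ⟨i, (hbh i).symm⟩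
    set s : Set (Fin n) := Set.range ih with hs
    set V' : Submodule O (Fin n → O) := Submodule.span O (bh '' sᶜ) with hV'
    have hcompl' : IsCompl Vσ V' := by
      rw [hVσ, hrv, hV']
      exact isCompl_span_image bh _
    set v' : ↥(sᶜ) → (Fin n → O) := fun m => bh m.1 with hv'
    have hv'li : LinearIndependent O v' :=
      bh.linearIndependent.comp Subtype.val Subtype.val_injective
    have hv'range : Submodule.span O (Set.range v') = V' := by
      rw [hV']
      congr 1
      rw [hv', show (fun m : ↥(sᶜ) => bh m.1) = bh ∘ Subtype.val from rfl, Set.range_comp,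
        Subtype.range_coe]
    let bV' : Basis ↥(sᶜ) O V' :=
      (Basis.span hv'li).map (LinearEquiv.ofEq _ _ hv'range)
    let eq1 := Submodule.quotientEquivOfIsCompl Vσ V' hcompl'
    let eq2 := Submodule.quotientEquivOfIsCompl Vσ W hcompl
    let bW : Basis ↥(sᶜ) O W := bV'.map (eq1.symm.trans eq2)
    have hcard : Fintype.card ↥(sᶜ) = n - (k+1) := by
      have h1 : Fintype.card ↥s = k + 1 := by
        rw [Fintype.card_congr (Equiv.ofInjective ih ih.injective).symm, Fintype.card_fin]
      rw [Fintype.card_compl_set, h1, Fintype.card_fin]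
    obtain ⟨r, hr⟩ : ∃ r, n - (k+1) = r + 1 := ⟨n - (k+1) - 1, by omega⟩
    let eJ : ↥(sᶜ) ≃ Fin (r+1) := Fintype.equivFinOfCardEq (by rw [hcard, hr])
    let bW' : Basis (Fin (r+1)) O W := bW.reindex eJ
    let ℓW : W →ₗ[O] O := L.comp W.subtype
    have hspan : Ideal.span (Set.range fun j => ℓW (bW' j)) = ⊤ := by
      rw [eq_top_iff, ← hmap]
      rintro x ⟨w, hw, rfl⟩
      exact apply_mem_span_values bW' ℓW ⟨w, hw⟩
    obtain ⟨cW, hcW⟩ := uc r W ℓW bW' hspan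
    let E : Fin (k+1) ⊕ ↥(sᶜ) ≃ Fin n :=
      (Equiv.sumCongr (Equiv.ofInjective ih ih.injective) (Equiv.refl ↥(sᶜ))).trans
        (Equiv.Set.sumCompl s)
    let E' : Fin (k+1) ⊕ Fin (r+1) ≃ Fin n :=
      (Equiv.sumCongr (Equiv.refl (Fin (k+1))) eJ.symm).trans E
    have hE'inl : ∀ i, E' (Sum.inl i) = ih i := by
      intro i
      simp [E', E]
    let B : Basis (Fin n) O (Fin n → O) :=
      ((bσ.prod cW).map (Submodule.prodEquivOfIsCompl Vσ W hcompl)).reindex E'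
    have hBι : ∀ i, B (ih i) = v i := by
      intro i
      rw [Basis.reindex_apply]
      have h0 : E'.symm (ih i) = Sum.inl i := by rw [Equiv.symm_apply_eq, hE'inl]
      rw [h0, Basis.map_apply, Basis.prod_apply]
      simp only [Sum.elim_inl, Function.comp_apply, LinearMap.inl_apply]
      have : (Submodule.prodEquivOfIsCompl Vσ W hcompl) ((bσ i : Vσ), (0 : W))
          = ((bσ i : Vσ) : Fin n → O) := by
        simp [Submodule.coe_prodEquivOfIsCompl']
      rw [this]
      exact congrArg Subtype.val (Basis.span_apply hvli i)
    have hBout : ∀ j : Fin (r+1), L (B (E' (Sum.inr j))) = 1 := by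
      intro j
      rw [Basis.reindex_apply, Equiv.symm_apply_apply, Basis.map_apply, Basis.prod_apply]
      simp only [Sum.elim_inr, Function.comp_apply, LinearMap.inr_apply]
      have : (Submodule.prodEquivOfIsCompl Vσ W hcompl) ((0 : Vσ), (cW j : W))
          = ((cW j : W) : Fin n → O) := by
        simp [Submodule.coe_prodEquivOfIsCompl']
      rw [this]
      exact hcW j
    refine ⟨B, ih, hBι, ?_, ⟨E' (Sum.inr 0), hBout 0⟩, ?_⟩
    · intro m
      cases hEm : E'.symm m with
      | inl i =>
        have hm : m = ih i := by
          rw [← hE'inl i, ← hEm, Equiv.apply_symm_apply]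
        rw [hm, hBι i]
        exact hI i
      | inr j =>
        have hm : m = E' (Sum.inr j) := by rw [← hEm, Equiv.apply_symm_apply]
        right
        rw [hm, hBout j, sub_self]
        exact I.zero_mem
    · intro m hm
      cases hEm : E'.symm m with
      | inl i =>
        exact absurd (by rw [← hE'inl i, ← hEm, Equiv.apply_symm_apply]) (hm i)
      | inr j =>
        rw [show m = E' (Sum.inr j) from by rw [← hEm, Equiv.apply_symm_apply]]
        exact hBout j
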